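/- Suppose Algorithm 1 generates an infinite sequence {(xᵏ, t_k, λᵏ, r_k)}, i.e. t_{k+1} > 0 for all k, (x^{k+1}, t_{k+1}) ∈ A(λᵏ, r_k), λ^{k+1} = λᵏ + (r_k/t_{k+1}) h(x^{k+1}) and r_{k+1} = 2 r_k. If the sequence {r_k} is bounded, then the sequence {λᵏ} is bounded. (In fact ‖λ^{k+1} − λ⁰‖ ≤ Σ_{j=0}^{k} r_j = r_{k+1} − r₀ for all k.) -/

import Mathlib

noncomputable section

open Classical in
/-- The extended-real-valued smoothing function `L̃_{λ,r}(x,t)`. -/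
def Ltilde {n m : ℕ} (f : EuclideanSpace ℝ (Fin n) → ℝ)
    (h : EuclideanSpace ℝ (Fin n) → EuclideanSpace ℝ (Fin m))
    (lam : EuclideanSpace ℝ (Fin m)) (r : ℝ)
    (x : EuclideanSpace ℝ (Fin n)) (t : ℝ) : EReal :=
  if 0 < t then
    (((f x + (inner ℝ lam (h x) : ℝ) + r / (2 * t) * ‖h x‖ ^ 2 + r / 2 * t) : ℝ) : EReal)
  else if t = 0 ∧ h x = 0 then ((f x : ℝ) : EReal)
  else ⊤

/-- The augmented dual function `q̃(λ, r) = inf_{(x,t)} L̃_{λ,r}(x,t)`. -/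
def qtilde {n m : ℕ} (f : EuclideanSpace ℝ (Fin n) → ℝ)
    (h : EuclideanSpace ℝ (Fin n) → EuclideanSpace ℝ (Fin m))
    (lam : EuclideanSpace ℝ (Fin m)) (r : ℝ) : EReal :=
  ⨅ p : EuclideanSpace ℝ (Fin n) × ℝ, Ltilde f h lam r p.1 p.2

/-- The set `A(λ, r)` of global minimizers of `L̃_{λ,r}`. -/
def Aset {n m : ℕ} (f : EuclideanSpace ℝ (Fin n) → ℝ)
    (h : EuclideanSpace ℝ (Fin n) → EuclideanSpace ℝ (Fin m))
    (lam : EuclideanSpace ℝ (Fin m)) (r : ℝ) :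
    Set (EuclideanSpace ℝ (Fin n) × ℝ) :=
  {p | Ltilde f h lam r p.1 p.2 = qtilde f h lam r}

/-- along an infinite run of Algorithm 1,
`‖λ^{k+1} − λ⁰‖ ≤ Σ_{j≤k} r_j = r_{k+1} − r₀`; hence if `{r_k}` is bounded
then `{λᵏ}` is bounded. -/
theorem stmt6 {n m : ℕ} (f : EuclideanSpace ℝ (Fin n) → ℝ)
    (h : EuclideanSpace ℝ (Fin n) → EuclideanSpace ℝ (Fin m))
    (hf : ContDiff ℝ 2 f) (hh : ContDiff ℝ 2 h)
    (x : ℕ → EuclideanSpace ℝ (Fin n)) (t : ℕ → ℝ)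
    (lam : ℕ → EuclideanSpace ℝ (Fin m)) (rr : ℕ → ℝ)
    (hr0 : 0 < rr 0)
    (hstep : ∀ k, 0 < t (k + 1) ∧
      (x (k + 1), t (k + 1)) ∈ Aset f h (lam k) (rr k) ∧
      lam (k + 1) = lam k + (rr k / t (k + 1)) • h (x (k + 1)) ∧
      rr (k + 1) = 2 * rr k) :
    (∀ k, ‖lam (k + 1) - lam 0‖ ≤ rr (k + 1) - rr 0) ∧
    ((∃ B, ∀ k, rr k ≤ B) → ∃ C, ∀ k, ‖lam k‖ ≤ C) := by
  -- positivity of rr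
  have hrpos : ∀ k, 0 < rr k := by
    intro k
    induction k with
    | zero => exact hr0
    | succ k ih => rw [(hstep k).2.2.2]; linarith
  -- the key step bound: each multiplier update has norm ≤ rr k
  have key : ∀ k, ‖lam (k + 1) - lam k‖ ≤ rr k := by
    intro k
    obtain ⟨hT, hmem, hlam, -⟩ := hstep k
    set r := rr k with hrdef
    set T := t (k + 1) with hTdef
    set y := x (k + 1) with hydef
    have hr : 0 < r := hrpos k
    have hkey : ∀ s : ℝ, Ltilde f h (lam k) r y T ≤ Ltilde f h (lam k) r y s := by
      intro s
      have : qtilde f h (lam k) r ≤ Ltilde f h (lam k) r y s :=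
        iInf_le _ ((y, s) : EuclideanSpace ℝ (Fin n) × ℝ)
      calc Ltilde f h (lam k) r y T = qtilde f h (lam k) r := hmem
        _ ≤ _ := this
    by_cases hz : h y = 0
    · -- impossible: comparing with t = 0 gives contradiction
      exfalso
      have h0 := hkey 0
      simp only [Ltilde, if_pos hT, hz, lt_irrefl, if_neg (lt_irrefl (0:ℝ)),
        and_self, if_true, if_false, inner_zero_right, norm_zero] at h0
      rw [EReal.coe_le_coe_iff] at h0
      nlinarith
    · -- compare with s = ‖h y‖ to get T = ‖h y‖
      set H := ‖h y‖ with hHdef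
      have hH : 0 < H := norm_pos_iff.mpr hz
      have h1 := hkey H
      simp only [Ltilde, if_pos hT, if_pos hH] at h1
      rw [EReal.coe_le_coe_iff] at h1
      have h2 : r / (2 * T) * H ^ 2 + r / 2 * T ≤ r / (2 * H) * H ^ 2 + r / 2 * H := by
        linarith
      have hTne : T ≠ 0 := ne_of_gt hT
      have hHne : H ≠ 0 := ne_of_gt hH
      field_simp [hTne, hHne] at h2
      replace h2 : r * H * (H ^ 2 + T ^ 2) ≤ r * H * (T * H * (1 + 1)) :=
        mul_le_mul_of_nonneg_left h2 (by positivity)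
      have hTH : T = H := by
        have e : r * H * (T - H) ^ 2 ≤ 0 := by nlinarith [h2]
        have hs : (T - H) ^ 2 ≤ 0 := by
          by_contra hc
          push_neg at hc
          nlinarith [mul_pos (mul_pos hr hH) hc]
        have h4 : (T - H) ^ 2 = 0 := le_antisymm hs (sq_nonneg (T - H))
        have h5 : T - H = 0 := by
          exact sub_eq_zero.mpr (sub_eq_zero.mp (sq_eq_zero_iff.mp h4)) ▸ sq_eq_zero_iff.mp h4
        linarith
      rw [hlam]
      have : lam k + (r / T) • h y - lam k = (r / T) • h y := by abel
      rw [this, norm_smul, Real.norm_eq_abs, abs_of_nonneg (by positivity)]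
      rw [hTH, div_mul_cancel₀ _ hHne]
  obtain ⟨hrpos, key⟩ := And.intro hrpos key
  -- the telescoped bound
  have main : ∀ k, ‖lam (k + 1) - lam 0‖ ≤ rr (k + 1) - rr 0 := by
    intro k
    induction k with
    | zero =>
      have := key 0
      have h1 : rr 1 = 2 * rr 0 := (hstep 0).2.2.2
      calc ‖lam 1 - lam 0‖ ≤ rr 0 := key 0
        _ ≤ rr 1 - rr 0 := by linarith
    | succ k ih =>
      have h1 : rr (k + 2) = 2 * rr (k + 1) := (hstep (k + 1)).2.2.2
      calc ‖lam (k + 2) - lam 0‖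
          ≤ ‖lam (k + 2) - lam (k + 1)‖ + ‖lam (k + 1) - lam 0‖ := by
            have := norm_sub_le_norm_sub_add_norm_sub (lam (k+2)) (lam (k+1)) (lam 0)
            exact this
        _ ≤ rr (k + 1) + (rr (k + 1) - rr 0) := add_le_add (key (k + 1)) ih
        _ = rr (k + 2) - rr 0 := by linarith
  refine ⟨main, ?_⟩
  rintro ⟨B, hB⟩
  refine ⟨‖lam 0‖ + B, ?_⟩
  intro k
  cases k with
  | zero =>
    have : (0:ℝ) ≤ B := le_trans (le_of_lt hr0) (hB 0)
    linarith
  | succ k =>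
    have h1 := main k
    have h2 := norm_le_norm_add_norm_sub' (lam (k+1)) (lam 0)
    have h3 := hB (k + 1)
    have h4 := hrpos 0
    -- ‖lam (k+1)‖ ≤ ‖lam 0‖ + ‖lam (k+1) - lam 0‖
    have h5 : ‖lam (k+1)‖ ≤ ‖lam 0‖ + ‖lam (k+1) - lam 0‖ := by
      have := norm_sub_norm_le (lam (k+1)) (lam 0)
      linarith [abs_le.mp (abs_norm_sub_norm_le (lam (k+1)) (lam 0))]
    linarith
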